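/- Let b₀ > 0 and t > 0. Set h := 1 + (b₀²/2)(coth t − 1) (so h > 1) and x* := b₀·h/√(h² − 1) (so x* > b₀ and x*/√(x*² − b₀²) = h). Define Z(x) := x·cosh t + [ (2/b₀²)(x − √(x² − b₀²)) − x ]·sinh t for x > b₀. Then: (a) x*² − b₀² = 2 sinh² t / (1 + (b₀²/2 − 1)e^{−2t}); (b) Z(x*) = √2·√(1 + (b₀²/2 − 1)e^{−2t}); (c) Z is differentiable at x* with Z′(x*) = 0, where Z′(x) = cosh t + [ (2/b₀²)(1 − x/√(x² − b₀²)) − 1 ]·sinh t. -/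

import Mathlib

/-- in the Hermite case with rescaled semicircle initial data supported on
`[-b₀, b₀]`, with `h = 1 + (b₀²/2)(coth t - 1)` and `x* = b₀ h / √(h² - 1)`, the
characteristic map `Z x = x cosh t + ((2/b₀²)(x - √(x² - b₀²)) - x) sinh t` satisfies:
`h > 1`, `x* > b₀`, `x*/√(x*² - b₀²) = h`,
(a) `x*² - b₀² = 2 sinh² t / (1 + (b₀²/2 - 1) e^{-2t})`,
(b) `Z x* = √2 √(1 + (b₀²/2 - 1) e^{-2t})`,
(c) `Z` is differentiable at `x*` with the stated derivative, which vanishes. -/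
theorem stmt_16 (b₀ t : ℝ) (hb₀ : 0 < b₀) (ht : 0 < t)
    (h xstar : ℝ)
    (hh : h = 1 + (b₀ ^ 2 / 2) * (Real.cosh t / Real.sinh t - 1))
    (hx : xstar = b₀ * h / Real.sqrt (h ^ 2 - 1))
    (Z : ℝ → ℝ)
    (hZ : ∀ x : ℝ, Z x = x * Real.cosh t
      + ((2 / b₀ ^ 2) * (x - Real.sqrt (x ^ 2 - b₀ ^ 2)) - x) * Real.sinh t) :
    1 < h ∧
    b₀ < xstar ∧
    xstar / Real.sqrt (xstar ^ 2 - b₀ ^ 2) = h ∧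
    xstar ^ 2 - b₀ ^ 2
      = 2 * Real.sinh t ^ 2 / (1 + (b₀ ^ 2 / 2 - 1) * Real.exp (-2 * t)) ∧
    Z xstar = Real.sqrt 2 * Real.sqrt (1 + (b₀ ^ 2 / 2 - 1) * Real.exp (-2 * t)) ∧
    HasDerivAt Z
      (Real.cosh t
        + ((2 / b₀ ^ 2) * (1 - xstar / Real.sqrt (xstar ^ 2 - b₀ ^ 2)) - 1)
          * Real.sinh t) xstar ∧
    Real.cosh t
        + ((2 / b₀ ^ 2) * (1 - xstar / Real.sqrt (xstar ^ 2 - b₀ ^ 2)) - 1)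
          * Real.sinh t = 0 := by
  set s := Real.sinh t with hsdef
  set c := Real.cosh t with hcdef
  set E := Real.exp (-t) with hEdef
  have hs : 0 < s := Real.sinh_pos_iff.mpr ht
  have hsc : s < c := Real.sinh_lt_cosh t
  have hE : 0 < E := Real.exp_pos _
  have hcs : c - s = E := Real.cosh_sub_sinh t
  have hb2 : (0:ℝ) < b₀ ^ 2 := by positivity
  -- h > 1
  have hh1 : 1 < h := by
    rw [hh]
    have : 1 < c / s := (one_lt_div hs).mpr hsc
    nlinarith
  -- h - 1 = (b₀²/2) E / s
  have hhm1 : h - 1 = (b₀ ^ 2 / 2) * E / s := by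
    have hcd : c / s - 1 = E / s := by
      rw [← hcs, sub_div, div_self hs.ne']
    rw [hh, hcd]; ring
  have hhp1 : (0:ℝ) < h + 1 := by linarith
  have hQ2pos : (0:ℝ) < h ^ 2 - 1 := by nlinarith
  set Q := Real.sqrt (h ^ 2 - 1) with hQdef
  have hQpos : 0 < Q := Real.sqrt_pos.mpr hQ2pos
  have hQsq : Q ^ 2 = h ^ 2 - 1 := Real.sq_sqrt hQ2pos.le
  have hxpos : 0 < xstar := by
    rw [hx]; positivity
  have hx2 : xstar ^ 2 - b₀ ^ 2 = b₀ ^ 2 / (h ^ 2 - 1) := by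
    rw [hx, div_pow, hQsq]
    field_simp
    ring
  have hx2pos : 0 < xstar ^ 2 - b₀ ^ 2 := by
    rw [hx2]; positivity
  have hxb : b₀ < xstar := by nlinarith
  -- W
  set W := Real.sqrt (xstar ^ 2 - b₀ ^ 2) with hWdef
  have hWpos : 0 < W := Real.sqrt_pos.mpr hx2pos
  have hWsq : W ^ 2 = xstar ^ 2 - b₀ ^ 2 := Real.sq_sqrt hx2pos.le
  have hW : W = b₀ / Q := by
    rw [hWdef, hx2, show h ^ 2 - 1 = Q ^ 2 from hQsq.symm, ← div_pow]
    exact Real.sqrt_sq (by positivity)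
  have hxW : xstar = h * W := by
    rw [hx, hW]; ring
  have hdivh : xstar / W = h := by
    rw [hxW]; field_simp
  -- D
  set D := 1 + (b₀ ^ 2 / 2 - 1) * Real.exp (-2 * t) with hDdef
  have hE2 : Real.exp (-2 * t) = E * E := by
    rw [hEdef, ← Real.exp_add]; ring_nf
  have h2s : 2 * s = Real.exp t - E := by
    rw [hsdef, Real.sinh_eq]; ring
  have hEe : E * Real.exp t = 1 := by
    rw [hEdef, ← Real.exp_add]; simp
  have hhm1' : (h - 1) * s = (b₀ ^ 2 / 2) * E := by
    rw [hhm1]; field_simp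
  have hDval : D = E * s * (h + 1) := by
    have hsh : s * (h + 1) = 2 * s + (b₀ ^ 2 / 2) * E := by
      linear_combination hhm1'
    rw [hDdef, hE2, mul_assoc, hsh]
    linear_combination (-E) * h2s - hEe
  have hDpos : 0 < D := by rw [hDval]; positivity
  -- (a)
  have hA : xstar ^ 2 - b₀ ^ 2 = 2 * s ^ 2 / D := by
    rw [hx2, hDval]
    rw [div_eq_div_iff (ne_of_gt hQ2pos) (by positivity)]
    have hkey : (h ^ 2 - 1) = (h - 1) * (h + 1) := by ring
    rw [hkey, hhm1]
    field_simp
  -- (b)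
  have hZval : Z xstar = W * (h + 1) * E := by
    rw [hZ xstar, ← hWdef, hxW]
    have h2b : (2 / b₀ ^ 2) * (h - 1) * s = E := by
      rw [hhm1]; field_simp
    linear_combination W * h2b + (W * h) * hcs
  have hZsq : (W * (h + 1) * E) ^ 2 = 2 * D := by
    have : W ^ 2 = b₀ ^ 2 / (h ^ 2 - 1) := by rw [hWsq, hx2]
    rw [show (W * (h + 1) * E) ^ 2 = W ^ 2 * (h + 1) ^ 2 * E ^ 2 by ring, this, hDval]
    rw [div_mul_eq_mul_div, div_mul_eq_mul_div, div_eq_iff (ne_of_gt hQ2pos)]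
    rw [show (h ^ 2 - 1) = (h - 1) * (h + 1) by ring, hhm1]
    field_simp
  have hB : Z xstar = Real.sqrt 2 * Real.sqrt D := by
    rw [hZval, ← Real.sqrt_mul (by norm_num : (0:ℝ) ≤ 2) D]
    rw [← hZsq, Real.sqrt_sq (by positivity)]
  -- (c)
  have hsq : HasDerivAt (fun x : ℝ => Real.sqrt (x ^ 2 - b₀ ^ 2)) (xstar / W) xstar := by
    have h1 : HasDerivAt (fun x : ℝ => x ^ 2 - b₀ ^ 2) (2 * xstar) xstar := by
      simpa using (hasDerivAt_pow 2 xstar).sub_const (b₀ ^ 2)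
    have h2 := (Real.hasDerivAt_sqrt (ne_of_gt hx2pos)).comp xstar h1
    refine h2.congr_deriv ?_
    rw [← hWdef]
    field_simp
  have hder : HasDerivAt Z
      (c + ((2 / b₀ ^ 2) * (1 - xstar / W) - 1) * s) xstar := by
    have hfun : Z = fun x : ℝ => x * c +
        ((2 / b₀ ^ 2) * (x - Real.sqrt (x ^ 2 - b₀ ^ 2)) - x) * s := funext hZ
    rw [hfun]
    have hd := (((hasDerivAt_id xstar).mul_const c).add
      (((((hasDerivAt_id xstar).sub hsq).const_mul (2 / b₀ ^ 2)).sub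
        (hasDerivAt_id xstar)).mul_const s))
    refine hd.congr_deriv ?_
    ring
  have hvan : c + ((2 / b₀ ^ 2) * (1 - xstar / W) - 1) * s = 0 := by
    rw [hdivh]
    have h2b : (2 / b₀ ^ 2) * (h - 1) * s = E := by
      rw [hhm1]; field_simp
    linear_combination hcs - h2b
  exact ⟨hh1, hxb, hdivh, hA, hB, hder, hvan⟩
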